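/- Every ℚ-Cartier divisor D on a triangulated product Δ of G and H satisfies the balancing conditions. -/

import Mathlib

open scoped Classical
open Finset

section TriangulatedProduct

variable {VG VH : Type*}

/-- The column of the Laplacian matrix of `G` indexed by the vertex `w`:
its entry at `v` is `-deg v` if `v = w`, `1` if `v` is adjacent to `w`, and `0` otherwise. -/
noncomputable def lapCol (G : SimpleGraph VG) [Fintype VG] (w v : VG) : ℤ :=
  if v = w then -(((Finset.univ.filter (fun u => G.Adj v u)).card : ℤ))
  else if G.Adj v w then 1 else 0

/-- A divisor on a finite graph is principal if it lies in the ℤ-span of the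
columns of the Laplacian matrix of the graph. -/
def GraphPrincipal (G : SimpleGraph VG) [Fintype VG] (D : VG → ℤ) : Prop :=
  ∃ f : VG → ℤ, ∀ v, D v = ∑ w, f w * lapCol G w v

/-- A triangulated product of the graphs `G` and `H`: for each square
(an edge `aa'` of `G` together with an edge `bb'` of `H`) exactly one of the two
possible diagonals `{(a,b),(a',b')}`, `{(a,b'),(a',b)}` is chosen.  The structure
records the resulting symmetric "diagonal edge" relation. -/
structure TriProd (G : SimpleGraph VG) (H : SimpleGraph VH) where
  diag : VG × VH → VG × VH → Prop
  diag_symm : ∀ u v, diag u v → diag v u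
  diag_adj : ∀ a a' b b', diag (a, b) (a', b') → G.Adj a a' ∧ H.Adj b b'
  diag_choice : ∀ a a' b b', G.Adj a a' → H.Adj b b' →
    (diag (a, b) (a', b') ∧ ¬ diag (a, b') (a', b)) ∨
    (¬ diag (a, b) (a', b') ∧ diag (a, b') (a', b))

namespace TriProd

variable {G : SimpleGraph VG} {H : SimpleGraph VH}

/-- `u` and `v` form an edge of the triangulated product: a horizontal edge,
a vertical edge, or a diagonal edge. -/
def Adj (T : TriProd G H) (u v : VG × VH) : Prop :=
  (u.2 = v.2 ∧ G.Adj u.1 v.1) ∨ (u.1 = v.1 ∧ H.Adj u.2 v.2) ∨ T.diag u v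

/-- `{u, v, w}` is a triangle (2-face) of the triangulated product. -/
def IsFace (T : TriProd G H) (u v w : VG × VH) : Prop :=
  ∃ a a' b b', T.diag (a, b) (a', b') ∧
    ({u, v, w} : Finset (VG × VH)) = {(a, b), (a', b'), (a', b)}

/-- `{u, v, w}` is a triangle of the triangulated product whose diagonal edge
does not contain the vertex `x`. -/
def IsFaceAvoiding (T : TriProd G H) (u v w x : VG × VH) : Prop :=
  ∃ a a' b b', T.diag (a, b) (a', b') ∧
    ({u, v, w} : Finset (VG × VH)) = {(a, b), (a', b'), (a', b)} ∧
    x ≠ (a, b) ∧ x ≠ (a', b')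

variable [Fintype VG] [Fintype VH]

/-- The structure constant `α(e, x)` for the edge `e = {u, v}` of the
triangulated product and the vertex `x`. -/
noncomputable def alpha (T : TriProd G H) (u v x : VG × VH) : ℤ :=
  if x = u ∨ x = v then
    (if T.diag u v then 1
     else ((Finset.univ.filter (fun w => T.IsFaceAvoiding u v w x)).card : ℤ))
  else 0

/-- The divisor of the function `φ`, evaluated at the edge `{u, v}` of the
triangulated product: the sum of `φ` over the third vertices of the triangles
containing `{u, v}`, minus `α({u,v},u) φ(u) + α({u,v},v) φ(v)`. -/
noncomputable def Div (T : TriProd G H) (φ : VG × VH → ℤ) (u v : VG × VH) : ℤ :=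
  (∑ w ∈ Finset.univ.filter (fun w => T.IsFace u v w), φ w)
    - (T.alpha u v u * φ u + T.alpha u v v * φ v)

/-- A divisor on the triangulated product (a function on edges, encoded as a
function on ordered pairs of vertices) is principal if it agrees with `Div φ`
on every edge, for some `φ`. -/
def Principal (T : TriProd G H) (D : VG × VH → VG × VH → ℤ) : Prop :=
  ∃ φ : VG × VH → ℤ, ∀ u v, T.Adj u v → D u v = T.Div φ u v

/-- A divisor on the triangulated product is Cartier if near every vertex `x`
it agrees with a principal divisor on all edges containing `x`. -/
def Cartier (T : TriProd G H) (D : VG × VH → VG × VH → ℤ) : Prop :=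
  ∀ x : VG × VH, ∃ φ : VG × VH → ℤ,
    ∀ u v, T.Adj u v → (x = u ∨ x = v) → D u v = T.Div φ u v

/-- A divisor is ℚ-Cartier if some nonzero integer multiple of it is Cartier. -/
def QCartier (T : TriProd G H) (D : VG × VH → VG × VH → ℤ) : Prop :=
  ∃ m : ℤ, m ≠ 0 ∧ T.Cartier (fun u v => m * D u v)

/-- The balancing conditions for a divisor `D` on the triangulated product. -/
def Balanced (T : TriProd G H) (D : VG × VH → VG × VH → ℤ) : Prop :=
  ∀ a : VG, ∀ b : VH,
    (∀ x x' : VG, G.Adj a x → G.Adj a x' →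
      (∑ c ∈ Finset.univ.filter (fun c : VH => T.Adj (a, b) (x, c)), D (a, b) (x, c)) =
      (∑ c ∈ Finset.univ.filter (fun c : VH => T.Adj (a, b) (x', c)), D (a, b) (x', c))) ∧
    (∀ y y' : VH, H.Adj b y → H.Adj b y' →
      (∑ c ∈ Finset.univ.filter (fun c : VG => T.Adj (a, b) (c, y)), D (a, b) (c, y)) =
      (∑ c ∈ Finset.univ.filter (fun c : VG => T.Adj (a, b) (c, y')), D (a, b) (c, y')))

end TriProd

/-- The map `β` sending a pair of divisors on `G` and `H` to a divisor on the
triangulated product: `C(a)` on vertical edges `{(a,b),(a,b')}`, `D(b)` on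
horizontal edges `{(a,b),(a',b)}`, and `0` on diagonal edges. -/
noncomputable def beta (C : VG → ℤ) (D : VH → ℤ) (u v : VG × VH) : ℤ :=
  if u.1 = v.1 then C u.1 else if u.2 = v.2 then D u.2 else 0

end TriangulatedProduct

section Aux
variable {VG VH : Type*} {G : SimpleGraph VG} {H : SimpleGraph VH}

namespace TriProd

lemma diag_ne_fst (T : TriProd G H) {a x : VG} {b c : VH} (h : T.diag (a,b) (x,c)) : a ≠ x :=
  (T.diag_adj _ _ _ _ h).1.ne

lemma diag_ne_snd (T : TriProd G H) {a x : VG} {b c : VH} (h : T.diag (a,b) (x,c)) : b ≠ c :=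
  (T.diag_adj _ _ _ _ h).2.ne

lemma diag_cases (T : TriProd G H) {a x : VG} {b c : VH} (hd : T.diag (a,b) (x,c))
    {w : VG × VH} {A A' : VG} {B B' : VH} (hAd : T.diag (A,B) (A',B'))
    (hset : ({(a,b),(x,c),w} : Finset (VG × VH)) = {(A,B),(A',B'),(A',B)}) :
    w = (x,b) ∨ w = (a,c) := by
  have hax : a ≠ x := T.diag_ne_fst hd
  have hbc : b ≠ c := T.diag_ne_snd hd
  have hAA : A ≠ A' := T.diag_ne_fst hAd
  have hBB : B ≠ B' := T.diag_ne_snd hAd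
  have h1 : ((a,b) : VG × VH) ∈ ({(A,B),(A',B'),(A',B)} : Finset (VG × VH)) := by
    rw [← hset]; simp
  have h2 : ((x,c) : VG × VH) ∈ ({(A,B),(A',B'),(A',B)} : Finset (VG × VH)) := by
    rw [← hset]; simp
  have h3 : ((A,B) : VG × VH) ∈ ({(a,b),(x,c),w} : Finset (VG × VH)) := by
    rw [hset]; simp
  have h4 : ((A',B') : VG × VH) ∈ ({(a,b),(x,c),w} : Finset (VG × VH)) := by
    rw [hset]; simp
  have h5 : ((A',B) : VG × VH) ∈ ({(a,b),(x,c),w} : Finset (VG × VH)) := by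
    rw [hset]; simp
  simp only [Finset.mem_insert, Finset.mem_singleton, Prod.mk.injEq] at h1 h2 h3 h4 h5
  rcases h1 with ⟨rfl, rfl⟩ | ⟨rfl, rfl⟩ | ⟨rfl, rfl⟩ <;>
    rcases h2 with ⟨rfl, rfl⟩ | ⟨rfl, rfl⟩ | ⟨rfl, rfl⟩ <;>
    simp_all <;> tauto

lemma horiz_cases (T : TriProd G H) {a x : VG} {b : VH} (hax : a ≠ x)
    {w : VG × VH} {A A' : VG} {B B' : VH} (hAd : T.diag (A,B) (A',B'))
    (hset : ({(a,b),(x,b),w} : Finset (VG × VH)) = {(A,B),(A',B'),(A',B)}) :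
    (A = a ∧ B = b ∧ A' = x ∧ w = (x,B') ∧ T.diag (a,b) (x,B')) ∨
    (A = x ∧ B = b ∧ A' = a ∧ w = (a,B') ∧ T.diag (a,B') (x,b)) := by
  have hAA : A ≠ A' := T.diag_ne_fst hAd
  have hBB : B ≠ B' := T.diag_ne_snd hAd
  have h1 : ((a,b) : VG × VH) ∈ ({(A,B),(A',B'),(A',B)} : Finset (VG × VH)) := by
    rw [← hset]; simp
  have h2 : ((x,b) : VG × VH) ∈ ({(A,B),(A',B'),(A',B)} : Finset (VG × VH)) := by
    rw [← hset]; simp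
  have h4 : ((A',B') : VG × VH) ∈ ({(a,b),(x,b),w} : Finset (VG × VH)) := by
    rw [hset]; simp
  simp only [Finset.mem_insert, Finset.mem_singleton, Prod.mk.injEq] at h1 h2 h4
  rcases h1 with ⟨e1, e2⟩ | ⟨e1, e2⟩ | ⟨e1, e2⟩ <;>
    rcases h2 with ⟨e3, e4⟩ | ⟨e3, e4⟩ | ⟨e3, e4⟩ <;>
    subst_vars <;>
    first
      | exact absurd rfl hax
      | exact absurd rfl hAA
      | exact absurd rfl hBB
      | (left; refine ⟨rfl, rfl, rfl, ?_, hAd⟩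
         rcases h4 with ⟨h, h'⟩ | ⟨h, h'⟩ | h <;> simp_all)
      | (right; refine ⟨rfl, rfl, rfl, ?_, T.diag_symm _ _ hAd⟩
         rcases h4 with ⟨h, h'⟩ | ⟨h, h'⟩ | h <;> simp_all)

lemma vert_cases (T : TriProd G H) {a : VG} {b y : VH} (hby : b ≠ y)
    {w : VG × VH} {A A' : VG} {B B' : VH} (hAd : T.diag (A,B) (A',B'))
    (hset : ({(a,b),(a,y),w} : Finset (VG × VH)) = {(A,B),(A',B'),(A',B)}) :
    (A' = a ∧ B' = b ∧ B = y ∧ w = (A,y) ∧ T.diag (a,b) (A,y)) ∨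
    (A' = a ∧ B = b ∧ B' = y ∧ w = (A,b) ∧ T.diag (a,y) (A,b)) := by
  have hAA : A ≠ A' := T.diag_ne_fst hAd
  have hBB : B ≠ B' := T.diag_ne_snd hAd
  have h1 : ((a,b) : VG × VH) ∈ ({(A,B),(A',B'),(A',B)} : Finset (VG × VH)) := by
    rw [← hset]; simp
  have h2 : ((a,y) : VG × VH) ∈ ({(A,B),(A',B'),(A',B)} : Finset (VG × VH)) := by
    rw [← hset]; simp
  have h4 : ((A,B) : VG × VH) ∈ ({(a,b),(a,y),w} : Finset (VG × VH)) := by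
    rw [hset]; simp
  simp only [Finset.mem_insert, Finset.mem_singleton, Prod.mk.injEq] at h1 h2 h4
  rcases h1 with ⟨e1, e2⟩ | ⟨e1, e2⟩ | ⟨e1, e2⟩ <;>
    rcases h2 with ⟨e3, e4⟩ | ⟨e3, e4⟩ | ⟨e3, e4⟩ <;>
    subst_vars <;>
    first
      | exact absurd rfl hby
      | exact absurd rfl hAA
      | exact absurd rfl hBB
      | (left; refine ⟨rfl, rfl, rfl, ?_, T.diag_symm _ _ hAd⟩
         rcases h4 with ⟨h, h'⟩ | ⟨h, h'⟩ | h <;> simp_all)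
      | (right; refine ⟨rfl, rfl, rfl, ?_, T.diag_symm _ _ hAd⟩
         rcases h4 with ⟨h, h'⟩ | ⟨h, h'⟩ | h <;> simp_all)

lemma diag_faces (T : TriProd G H) {a x : VG} {b c : VH} (hd : T.diag (a,b) (x,c)) (w : VG × VH) :
    T.IsFace (a,b) (x,c) w ↔ w = (x,b) ∨ w = (a,c) := by
  constructor
  · rintro ⟨A, A', B, B', hAd, hset⟩
    exact T.diag_cases hd hAd hset
  · rintro (rfl | rfl)
    · exact ⟨a, x, b, c, hd, rfl⟩
    · exact ⟨x, a, c, b, T.diag_symm _ _ hd, by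
        ext z; simp only [Finset.mem_insert, Finset.mem_singleton]; tauto⟩

lemma horiz_faces (T : TriProd G H) {a x : VG} (hax : a ≠ x) (b : VH) (w : VG × VH) :
    T.IsFace (a,b) (x,b) w ↔
      (∃ c, w = (x,c) ∧ T.diag (a,b) (x,c)) ∨ (∃ c, w = (a,c) ∧ T.diag (a,c) (x,b)) := by
  constructor
  · rintro ⟨A, A', B, B', hAd, hset⟩
    rcases T.horiz_cases hax hAd hset with ⟨_, _, _, hw, hdg⟩ | ⟨_, _, _, hw, hdg⟩
    · exact Or.inl ⟨B', hw, hdg⟩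
    · exact Or.inr ⟨B', hw, hdg⟩
  · rintro (⟨c, rfl, hdg⟩ | ⟨c, rfl, hdg⟩)
    · exact ⟨a, x, b, c, hdg, by
        ext z; simp only [Finset.mem_insert, Finset.mem_singleton]; tauto⟩
    · exact ⟨x, a, b, c, T.diag_symm _ _ hdg, by
        ext z; simp only [Finset.mem_insert, Finset.mem_singleton]; tauto⟩

lemma horiz_avoid_fst (T : TriProd G H) {a x : VG} (hax : a ≠ x) (b : VH) (w : VG × VH) :
    T.IsFaceAvoiding (a,b) (x,b) w (a,b) ↔ ∃ c, w = (a,c) ∧ T.diag (a,c) (x,b) := by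
  constructor
  · rintro ⟨A, A', B, B', hAd, hset, hne1, hne2⟩
    rcases T.horiz_cases hax hAd hset with ⟨rfl, rfl, _, hw, hdg⟩ | ⟨_, _, _, hw, hdg⟩
    · exact absurd rfl hne1
    · exact ⟨B', hw, hdg⟩
  · rintro ⟨c, rfl, hdg⟩
    have hbc : c ≠ b := T.diag_ne_snd hdg
    refine ⟨x, a, b, c, T.diag_symm _ _ hdg, ?_, ?_, ?_⟩
    · ext z; simp only [Finset.mem_insert, Finset.mem_singleton]; tauto
    · simp [hax]
    · simp [hbc.symm]

lemma horiz_avoid_snd (T : TriProd G H) {a x : VG} (hax : a ≠ x) (b : VH) (w : VG × VH) :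
    T.IsFaceAvoiding (a,b) (x,b) w (x,b) ↔ ∃ c, w = (x,c) ∧ T.diag (a,b) (x,c) := by
  constructor
  · rintro ⟨A, A', B, B', hAd, hset, hne1, hne2⟩
    rcases T.horiz_cases hax hAd hset with ⟨_, _, _, hw, hdg⟩ | ⟨rfl, rfl, _, hw, hdg⟩
    · exact ⟨B', hw, hdg⟩
    · exact absurd rfl hne1
  · rintro ⟨c, rfl, hdg⟩
    have hbc : b ≠ c := T.diag_ne_snd hdg
    refine ⟨a, x, b, c, hdg, ?_, ?_, ?_⟩
    · ext z; simp only [Finset.mem_insert, Finset.mem_singleton]; tauto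
    · simp [hax.symm]
    · simp [hbc]

lemma vert_faces (T : TriProd G H) {b y : VH} (hby : b ≠ y) (a : VG) (w : VG × VH) :
    T.IsFace (a,b) (a,y) w ↔
      (∃ c, w = (c,y) ∧ T.diag (a,b) (c,y)) ∨ (∃ c, w = (c,b) ∧ T.diag (a,y) (c,b)) := by
  constructor
  · rintro ⟨A, A', B, B', hAd, hset⟩
    rcases T.vert_cases hby hAd hset with ⟨_, _, _, hw, hdg⟩ | ⟨_, _, _, hw, hdg⟩
    · exact Or.inl ⟨A, hw, hdg⟩
    · exact Or.inr ⟨A, hw, hdg⟩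
  · rintro (⟨c, rfl, hdg⟩ | ⟨c, rfl, hdg⟩)
    · exact ⟨c, a, y, b, T.diag_symm _ _ hdg, by
        ext z; simp only [Finset.mem_insert, Finset.mem_singleton]; tauto⟩
    · exact ⟨c, a, b, y, T.diag_symm _ _ hdg, by
        ext z; simp only [Finset.mem_insert, Finset.mem_singleton]; tauto⟩

lemma vert_avoid_fst (T : TriProd G H) {b y : VH} (hby : b ≠ y) (a : VG) (w : VG × VH) :
    T.IsFaceAvoiding (a,b) (a,y) w (a,b) ↔ ∃ c, w = (c,b) ∧ T.diag (a,y) (c,b) := by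
  constructor
  · rintro ⟨A, A', B, B', hAd, hset, hne1, hne2⟩
    rcases T.vert_cases hby hAd hset with ⟨h1', h2', _, hw, hdg⟩ | ⟨_, _, _, hw, hdg⟩
    · exact absurd (by rw [h1', h2']) hne2
    · exact ⟨A, hw, hdg⟩
  · rintro ⟨c, rfl, hdg⟩
    have hac : a ≠ c := (T.diag_ne_fst hdg)
    refine ⟨c, a, b, y, T.diag_symm _ _ hdg, ?_, ?_, ?_⟩
    · ext z; simp only [Finset.mem_insert, Finset.mem_singleton]; tauto
    · simp [hac]
    · simp [hby]

lemma vert_avoid_snd (T : TriProd G H) {b y : VH} (hby : b ≠ y) (a : VG) (w : VG × VH) :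
    T.IsFaceAvoiding (a,b) (a,y) w (a,y) ↔ ∃ c, w = (c,y) ∧ T.diag (a,b) (c,y) := by
  constructor
  · rintro ⟨A, A', B, B', hAd, hset, hne1, hne2⟩
    rcases T.vert_cases hby hAd hset with ⟨_, _, _, hw, hdg⟩ | ⟨h1', _, h3', hw, hdg⟩
    · exact ⟨A, hw, hdg⟩
    · exact absurd (by rw [h1', h3']) hne2
  · rintro ⟨c, rfl, hdg⟩
    have hac : a ≠ c := T.diag_ne_fst hdg
    refine ⟨c, a, y, b, T.diag_symm _ _ hdg, ?_, ?_, ?_⟩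
    · ext z; simp only [Finset.mem_insert, Finset.mem_singleton]; tauto
    · simp [hac]
    · simp [hby.symm]

lemma not_diag_horiz (T : TriProd G H) (a x : VG) (b : VH) : ¬ T.diag (a,b) (x,b) :=
  fun h => (T.diag_adj _ _ _ _ h).2.ne rfl

lemma not_diag_vert (T : TriProd G H) (a : VG) (b y : VH) : ¬ T.diag (a,b) (a,y) :=
  fun h => (T.diag_adj _ _ _ _ h).1.ne rfl

variable [Fintype VG] [Fintype VH]

lemma div_diag (T : TriProd G H) (φ : VG × VH → ℤ) {a x : VG} {b c : VH}
    (hd : T.diag (a,b) (x,c)) :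
    T.Div φ (a,b) (x,c) = φ (x,b) + φ (a,c) - (φ (a,b) + φ (x,c)) := by
  have hax : a ≠ x := T.diag_ne_fst hd
  have hfil : Finset.univ.filter (fun w => T.IsFace (a,b) (x,c) w)
      = {((x,b) : VG × VH), (a,c)} := by
    ext w; simp [T.diag_faces hd]
  have hne : ((x,b) : VG × VH) ≠ (a,c) := by simp [hax.symm]
  rw [TriProd.Div, hfil, Finset.sum_pair hne, TriProd.alpha, TriProd.alpha]
  simp only [hd, if_true, if_pos (Or.inl rfl), if_pos (Or.inr rfl)]
  simp

lemma div_horiz (T : TriProd G H) (φ : VG × VH → ℤ) {a x : VG} (hax : a ≠ x) (b : VH) :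
    T.Div φ (a,b) (x,b) =
      ((∑ c ∈ Finset.univ.filter (fun c => T.diag (a,b) (x,c)), φ (x,c))
        + ∑ c ∈ Finset.univ.filter (fun c => T.diag (a,c) (x,b)), φ (a,c))
      - (((Finset.univ.filter (fun c : VH => T.diag (a,c) (x,b))).card : ℤ) * φ (a,b)
        + ((Finset.univ.filter (fun c : VH => T.diag (a,b) (x,c))).card : ℤ) * φ (x,b)) := by
  classical
  set A := Finset.univ.filter (fun c : VH => T.diag (a,b) (x,c)) with hA
  set B := Finset.univ.filter (fun c : VH => T.diag (a,c) (x,b)) with hB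
  have hinjx : Function.Injective (fun c : VH => ((x,c) : VG × VH)) := by
    intro c d h; exact (Prod.mk.injEq _ _ _ _ ▸ h).2
  have hinja : Function.Injective (fun c : VH => ((a,c) : VG × VH)) := by
    intro c d h; exact (Prod.mk.injEq _ _ _ _ ▸ h).2
  have hfaces : Finset.univ.filter (fun w => T.IsFace (a,b) (x,b) w)
      = A.image (fun c => ((x,c) : VG × VH)) ∪ B.image (fun c => ((a,c) : VG × VH)) := by
    ext w
    constructor
    · intro hw
      rcases (T.horiz_faces hax b w).1 (Finset.mem_filter.1 hw).2 with ⟨c, rfl, hc⟩ | ⟨c, rfl, hc⟩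
      · exact Finset.mem_union_left _
          (Finset.mem_image.2 ⟨c, Finset.mem_filter.2 ⟨Finset.mem_univ _, hc⟩, rfl⟩)
      · exact Finset.mem_union_right _
          (Finset.mem_image.2 ⟨c, Finset.mem_filter.2 ⟨Finset.mem_univ _, hc⟩, rfl⟩)
    · intro hw
      refine Finset.mem_filter.2 ⟨Finset.mem_univ _, (T.horiz_faces hax b w).2 ?_⟩
      rcases Finset.mem_union.1 hw with hw | hw
      · obtain ⟨c, hc, rfl⟩ := Finset.mem_image.1 hw
        exact Or.inl ⟨c, rfl, (Finset.mem_filter.1 hc).2⟩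
      · obtain ⟨c, hc, rfl⟩ := Finset.mem_image.1 hw
        exact Or.inr ⟨c, rfl, (Finset.mem_filter.1 hc).2⟩
  have hdisj : Disjoint (A.image (fun c => ((x,c) : VG × VH)))
      (B.image (fun c => ((a,c) : VG × VH))) := by
    rw [Finset.disjoint_left]
    rintro w hw1 hw2
    obtain ⟨c, _, rfl⟩ := Finset.mem_image.1 hw1
    obtain ⟨d, _, hd⟩ := Finset.mem_image.1 hw2
    exact hax (congrArg Prod.fst hd)
  have havf : Finset.univ.filter (fun w => T.IsFaceAvoiding (a,b) (x,b) w (a,b))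
      = B.image (fun c => ((a,c) : VG × VH)) := by
    ext w
    constructor
    · intro hw
      obtain ⟨c, rfl, hc⟩ := (T.horiz_avoid_fst hax b w).1 (Finset.mem_filter.1 hw).2
      exact Finset.mem_image.2 ⟨c, Finset.mem_filter.2 ⟨Finset.mem_univ _, hc⟩, rfl⟩
    · intro hw
      obtain ⟨c, hc, rfl⟩ := Finset.mem_image.1 hw
      exact Finset.mem_filter.2 ⟨Finset.mem_univ _,
        (T.horiz_avoid_fst hax b _).2 ⟨c, rfl, (Finset.mem_filter.1 hc).2⟩⟩
  have havs : Finset.univ.filter (fun w => T.IsFaceAvoiding (a,b) (x,b) w (x,b))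
      = A.image (fun c => ((x,c) : VG × VH)) := by
    ext w
    constructor
    · intro hw
      obtain ⟨c, rfl, hc⟩ := (T.horiz_avoid_snd hax b w).1 (Finset.mem_filter.1 hw).2
      exact Finset.mem_image.2 ⟨c, Finset.mem_filter.2 ⟨Finset.mem_univ _, hc⟩, rfl⟩
    · intro hw
      obtain ⟨c, hc, rfl⟩ := Finset.mem_image.1 hw
      exact Finset.mem_filter.2 ⟨Finset.mem_univ _,
        (T.horiz_avoid_snd hax b _).2 ⟨c, rfl, (Finset.mem_filter.1 hc).2⟩⟩
  have hnd : ¬ T.diag (a,b) (x,b) := T.not_diag_horiz a x b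
  rw [TriProd.Div, hfaces, Finset.sum_union hdisj,
    Finset.sum_image (fun c _ d _ h => hinjx h), Finset.sum_image (fun c _ d _ h => hinja h),
    TriProd.alpha, TriProd.alpha]
  rw [if_pos (Or.inl rfl), if_pos (Or.inr rfl), if_neg hnd, if_neg hnd, havf, havs,
    Finset.card_image_of_injective _ hinja, Finset.card_image_of_injective _ hinjx]

lemma div_vert (T : TriProd G H) (φ : VG × VH → ℤ) {b y : VH} (hby : b ≠ y) (a : VG) :
    T.Div φ (a,b) (a,y) =
      ((∑ c ∈ Finset.univ.filter (fun c => T.diag (a,b) (c,y)), φ (c,y))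
        + ∑ c ∈ Finset.univ.filter (fun c => T.diag (a,y) (c,b)), φ (c,b))
      - (((Finset.univ.filter (fun c : VG => T.diag (a,y) (c,b))).card : ℤ) * φ (a,b)
        + ((Finset.univ.filter (fun c : VG => T.diag (a,b) (c,y))).card : ℤ) * φ (a,y)) := by
  classical
  set A := Finset.univ.filter (fun c : VG => T.diag (a,b) (c,y)) with hA
  set B := Finset.univ.filter (fun c : VG => T.diag (a,y) (c,b)) with hB
  have hinjy : Function.Injective (fun c : VG => ((c,y) : VG × VH)) := by
    intro c d h; exact (Prod.mk.injEq _ _ _ _ ▸ h).1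
  have hinjb : Function.Injective (fun c : VG => ((c,b) : VG × VH)) := by
    intro c d h; exact (Prod.mk.injEq _ _ _ _ ▸ h).1
  have hfaces : Finset.univ.filter (fun w => T.IsFace (a,b) (a,y) w)
      = A.image (fun c => ((c,y) : VG × VH)) ∪ B.image (fun c => ((c,b) : VG × VH)) := by
    ext w
    constructor
    · intro hw
      rcases (T.vert_faces hby a w).1 (Finset.mem_filter.1 hw).2 with ⟨c, rfl, hc⟩ | ⟨c, rfl, hc⟩
      · exact Finset.mem_union_left _
          (Finset.mem_image.2 ⟨c, Finset.mem_filter.2 ⟨Finset.mem_univ _, hc⟩, rfl⟩)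
      · exact Finset.mem_union_right _
          (Finset.mem_image.2 ⟨c, Finset.mem_filter.2 ⟨Finset.mem_univ _, hc⟩, rfl⟩)
    · intro hw
      refine Finset.mem_filter.2 ⟨Finset.mem_univ _, (T.vert_faces hby a w).2 ?_⟩
      rcases Finset.mem_union.1 hw with hw | hw
      · obtain ⟨c, hc, rfl⟩ := Finset.mem_image.1 hw
        exact Or.inl ⟨c, rfl, (Finset.mem_filter.1 hc).2⟩
      · obtain ⟨c, hc, rfl⟩ := Finset.mem_image.1 hw
        exact Or.inr ⟨c, rfl, (Finset.mem_filter.1 hc).2⟩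
  have hdisj : Disjoint (A.image (fun c => ((c,y) : VG × VH)))
      (B.image (fun c => ((c,b) : VG × VH))) := by
    rw [Finset.disjoint_left]
    rintro w hw1 hw2
    obtain ⟨c, _, rfl⟩ := Finset.mem_image.1 hw1
    obtain ⟨d, _, hd⟩ := Finset.mem_image.1 hw2
    exact hby (congrArg Prod.snd hd)
  have havf : Finset.univ.filter (fun w => T.IsFaceAvoiding (a,b) (a,y) w (a,b))
      = B.image (fun c => ((c,b) : VG × VH)) := by
    ext w
    constructor
    · intro hw
      obtain ⟨c, rfl, hc⟩ := (T.vert_avoid_fst hby a w).1 (Finset.mem_filter.1 hw).2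
      exact Finset.mem_image.2 ⟨c, Finset.mem_filter.2 ⟨Finset.mem_univ _, hc⟩, rfl⟩
    · intro hw
      obtain ⟨c, hc, rfl⟩ := Finset.mem_image.1 hw
      exact Finset.mem_filter.2 ⟨Finset.mem_univ _,
        (T.vert_avoid_fst hby a _).2 ⟨c, rfl, (Finset.mem_filter.1 hc).2⟩⟩
  have havs : Finset.univ.filter (fun w => T.IsFaceAvoiding (a,b) (a,y) w (a,y))
      = A.image (fun c => ((c,y) : VG × VH)) := by
    ext w
    constructor
    · intro hw
      obtain ⟨c, rfl, hc⟩ := (T.vert_avoid_snd hby a w).1 (Finset.mem_filter.1 hw).2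
      exact Finset.mem_image.2 ⟨c, Finset.mem_filter.2 ⟨Finset.mem_univ _, hc⟩, rfl⟩
    · intro hw
      obtain ⟨c, hc, rfl⟩ := Finset.mem_image.1 hw
      exact Finset.mem_filter.2 ⟨Finset.mem_univ _,
        (T.vert_avoid_snd hby a _).2 ⟨c, rfl, (Finset.mem_filter.1 hc).2⟩⟩
  have hnd : ¬ T.diag (a,b) (a,y) := T.not_diag_vert a b y
  rw [TriProd.Div, hfaces, Finset.sum_union hdisj,
    Finset.sum_image (fun c _ d _ h => hinjy h), Finset.sum_image (fun c _ d _ h => hinjb h),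
    TriProd.alpha, TriProd.alpha]
  rw [if_pos (Or.inl rfl), if_pos (Or.inr rfl), if_neg hnd, if_neg hnd, havf, havs,
    Finset.card_image_of_injective _ hinjb, Finset.card_image_of_injective _ hinjy]

lemma row_partition (T : TriProd G H) {a x : VG} (hax : G.Adj a x) (b : VH) :
    Disjoint (Finset.univ.filter (fun c : VH => T.diag (a,b) (x,c)))
      (Finset.univ.filter (fun c : VH => T.diag (a,c) (x,b))) ∧
    Finset.univ.filter (fun c : VH => T.diag (a,b) (x,c)) ∪
      Finset.univ.filter (fun c : VH => T.diag (a,c) (x,b))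
      = Finset.univ.filter (fun c : VH => H.Adj b c) := by
  constructor
  · rw [Finset.disjoint_left]
    intro c h1 h2
    have hc1 := (Finset.mem_filter.1 h1).2
    have hc2 := (Finset.mem_filter.1 h2).2
    rcases T.diag_choice a x b c hax (T.diag_adj _ _ _ _ hc1).2 with ⟨_, h⟩ | ⟨h, _⟩
    · exact h hc2
    · exact h hc1
  · ext c
    simp only [Finset.mem_union, Finset.mem_filter, Finset.mem_univ, true_and]
    constructor
    · rintro (h | h)
      · exact (T.diag_adj _ _ _ _ h).2
      · exact ((T.diag_adj _ _ _ _ h).2).symm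
    · intro h
      rcases T.diag_choice a x b c hax h with ⟨h1, _⟩ | ⟨_, h2⟩
      · exact Or.inl h1
      · exact Or.inr h2

lemma col_partition (T : TriProd G H) {b y : VH} (hby : H.Adj b y) (a : VG) :
    Disjoint (Finset.univ.filter (fun c : VG => T.diag (a,b) (c,y)))
      (Finset.univ.filter (fun c : VG => T.diag (a,y) (c,b))) ∧
    Finset.univ.filter (fun c : VG => T.diag (a,b) (c,y)) ∪
      Finset.univ.filter (fun c : VG => T.diag (a,y) (c,b))
      = Finset.univ.filter (fun c : VG => G.Adj a c) := by
  constructor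
  · rw [Finset.disjoint_left]
    intro c h1 h2
    have hc1 := (Finset.mem_filter.1 h1).2
    have hc2 := (Finset.mem_filter.1 h2).2
    rcases T.diag_choice a c b y (T.diag_adj _ _ _ _ hc1).1 hby with ⟨_, h⟩ | ⟨h, _⟩
    · exact h hc2
    · exact h hc1
  · ext c
    simp only [Finset.mem_union, Finset.mem_filter, Finset.mem_univ, true_and]
    constructor
    · rintro (h | h)
      · exact (T.diag_adj _ _ _ _ h).1
      · exact (T.diag_adj _ _ _ _ h).1
    · intro h
      rcases T.diag_choice a c b y h hby with ⟨h1, _⟩ | ⟨_, h2⟩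
      · exact Or.inl h1
      · exact Or.inr h2

lemma sum_div_row (T : TriProd G H) (φ : VG × VH → ℤ) {a x : VG} (hax : G.Adj a x) (b : VH) :
    (∑ c ∈ Finset.univ.filter (fun c : VH => T.Adj (a, b) (x, c)), T.Div φ (a,b) (x,c))
      = (∑ c ∈ Finset.univ.filter (fun c : VH => H.Adj b c), φ (a,c))
        - ((Finset.univ.filter (fun c : VH => H.Adj b c)).card : ℤ) * φ (a,b) := by
  have hax' : a ≠ x := hax.ne
  have hfil : Finset.univ.filter (fun c : VH => T.Adj (a, b) (x, c))
      = insert b (Finset.univ.filter (fun c : VH => T.diag (a,b) (x,c))) := by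
    ext c
    simp only [Finset.mem_filter, Finset.mem_univ, true_and, Finset.mem_insert]
    simp only [TriProd.Adj]
    constructor
    · rintro (⟨h1, -⟩ | ⟨h1, -⟩ | h)
      · exact Or.inl h1.symm
      · exact absurd h1 hax'
      · exact Or.inr h
    · rintro (rfl | h)
      · exact Or.inl ⟨rfl, hax⟩
      · exact Or.inr (Or.inr h)
  have hnb : b ∉ Finset.univ.filter (fun c : VH => T.diag (a,b) (x,c)) := by
    simp [T.not_diag_horiz]
  rw [hfil, Finset.sum_insert hnb, T.div_horiz φ hax' b,
    Finset.sum_congr rfl (fun c hc => T.div_diag φ (Finset.mem_filter.1 hc).2)]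
  obtain ⟨hdisj, hun⟩ := T.row_partition hax b
  rw [← hun, Finset.sum_union hdisj, Finset.card_union_of_disjoint hdisj,
    Finset.sum_sub_distrib, Finset.sum_add_distrib, Finset.sum_add_distrib,
    Finset.sum_const, Finset.sum_const]
  simp only [nsmul_eq_mul]
  push_cast
  ring

lemma sum_div_col (T : TriProd G H) (φ : VG × VH → ℤ) {b y : VH} (hby : H.Adj b y) (a : VG) :
    (∑ c ∈ Finset.univ.filter (fun c : VG => T.Adj (a, b) (c, y)), T.Div φ (a,b) (c,y))
      = (∑ c ∈ Finset.univ.filter (fun c : VG => G.Adj a c), φ (c,b))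
        - ((Finset.univ.filter (fun c : VG => G.Adj a c)).card : ℤ) * φ (a,b) := by
  have hby' : b ≠ y := hby.ne
  have hfil : Finset.univ.filter (fun c : VG => T.Adj (a, b) (c, y))
      = insert a (Finset.univ.filter (fun c : VG => T.diag (a,b) (c,y))) := by
    ext c
    simp only [Finset.mem_filter, Finset.mem_univ, true_and, Finset.mem_insert]
    simp only [TriProd.Adj]
    constructor
    · rintro (⟨h1, -⟩ | ⟨h1, -⟩ | h)
      · exact absurd h1 hby'
      · exact Or.inl h1.symm
      · exact Or.inr h
    · rintro (rfl | h)
      · exact Or.inr (Or.inl ⟨rfl, hby⟩)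
      · exact Or.inr (Or.inr h)
  have hna : a ∉ Finset.univ.filter (fun c : VG => T.diag (a,b) (c,y)) := by
    simp [T.not_diag_vert]
  rw [hfil, Finset.sum_insert hna, T.div_vert φ hby' a,
    Finset.sum_congr rfl (fun c hc => T.div_diag φ (Finset.mem_filter.1 hc).2)]
  obtain ⟨hdisj, hun⟩ := T.col_partition hby a
  rw [← hun, Finset.sum_union hdisj, Finset.card_union_of_disjoint hdisj,
    Finset.sum_sub_distrib, Finset.sum_add_distrib, Finset.sum_add_distrib,
    Finset.sum_const, Finset.sum_const]
  simp only [nsmul_eq_mul]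
  push_cast
  ring

end TriProd
end Aux

/-- Every ℚ-Cartier divisor on a triangulated product of `G` and `H`
satisfies the balancing conditions. -/
theorem qcartier_satisfies_balancing {VG VH : Type*} [Fintype VG] [Fintype VH]
    (G : SimpleGraph VG) (H : SimpleGraph VH)
    (hG : G.Connected) (hH : H.Connected)
    (hGe : ∃ a a', G.Adj a a') (hHe : ∃ b b', H.Adj b b')
    (T : TriProd G H)
    (D : VG × VH → VG × VH → ℤ) (hsymm : ∀ u v, D u v = D v u)
    (hD : T.QCartier D) :
    T.Balanced D := by
  obtain ⟨m, hm, hC⟩ := hD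
  intro a b
  obtain ⟨φ, hφ⟩ := hC (a, b)
  have key_row : ∀ x : VG, G.Adj a x →
      m * ∑ c ∈ Finset.univ.filter (fun c : VH => T.Adj (a, b) (x, c)), D (a, b) (x, c)
      = (∑ c ∈ Finset.univ.filter (fun c : VH => H.Adj b c), φ (a, c))
        - ((Finset.univ.filter (fun c : VH => H.Adj b c)).card : ℤ) * φ (a, b) := by
    intro x hx
    rw [Finset.mul_sum,
      Finset.sum_congr rfl (fun c hc => hφ _ _ (Finset.mem_filter.1 hc).2 (Or.inl rfl))]
    exact T.sum_div_row φ hx b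
  have key_col : ∀ y : VH, H.Adj b y →
      m * ∑ c ∈ Finset.univ.filter (fun c : VG => T.Adj (a, b) (c, y)), D (a, b) (c, y)
      = (∑ c ∈ Finset.univ.filter (fun c : VG => G.Adj a c), φ (c, b))
        - ((Finset.univ.filter (fun c : VG => G.Adj a c)).card : ℤ) * φ (a, b) := by
    intro y hy
    rw [Finset.mul_sum,
      Finset.sum_congr rfl (fun c hc => hφ _ _ (Finset.mem_filter.1 hc).2 (Or.inl rfl))]
    exact T.sum_div_col φ hy a
  refine ⟨fun x x' hx hx' => ?_, fun y y' hy hy' => ?_⟩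
  · exact mul_left_cancel₀ hm ((key_row x hx).trans (key_row x' hx').symm)
  · exact mul_left_cancel₀ hm ((key_col y hy).trans (key_col y' hy').symm)
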